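/- arXiv:0908.3879 — 2 statements merged into one kernel-verified Lean document; each statement's English description precedes it below -/
import Mathlib

section
/- Let x ∈ gl(i, ℂ) be a regular element, i.e., its centralizer z(x) = {y ∈ gl(i,ℂ) : [x,y] = 0} has dimension i. Then the centralizer of x equals the linear span of the powers x^0 = I, x, x^2, ..., x^{i-1}. -/
noncomputable section

open Matrix Polynomial Module Submodule

/-- The centralizer of `x` in `gl(i,ℂ)`, as a subspace. -/
def matCentralizer (i : ℕ) (x : Matrix (Fin i) (Fin i) ℂ) :
    Submodule ℂ (Matrix (Fin i) (Fin i) ℂ) :=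
  LinearMap.ker (LinearMap.mulLeft ℂ x - LinearMap.mulRight ℂ x)

/-! ### Dimension of quotients of `ℂ[X]` -/

lemma quot_span_top (q : ℂ[X]) (hq : q ≠ 0) :
    (⊤ : Submodule ℂ (ℂ[X] ⧸ (ℂ[X] ∙ q))) ≤
      Submodule.span ℂ (Set.range fun j : Fin q.natDegree =>
        Submodule.mkQ (ℂ[X] ∙ q) (X ^ (j : ℕ))) := by
  set q' : ℂ[X] := q * C q.leadingCoeff⁻¹ with hq'
  have hmon : q'.Monic := monic_mul_leadingCoeff_inv hq
  have hdeg : q'.natDegree = q.natDegree := by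
    have : q'.degree = q.degree := degree_mul_leadingCoeff_inv q hq
    simp [natDegree, this]
  have hspan : (ℂ[X] ∙ q) = (ℂ[X] ∙ q') := by
    apply le_antisymm
    · rw [Submodule.span_singleton_le_iff_mem]
      refine Submodule.mem_span_singleton.mpr ⟨C q.leadingCoeff, ?_⟩
      rw [hq', smul_eq_mul, mul_comm q, ← mul_assoc, ← C_mul,
        mul_inv_cancel₀ (leadingCoeff_ne_zero.mpr hq), C_1, one_mul]
    · rw [Submodule.span_singleton_le_iff_mem]
      exact Submodule.mem_span_singleton.mpr ⟨C q.leadingCoeff⁻¹, by rw [hq', smul_eq_mul]; ring⟩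
  rintro z -
  obtain ⟨r, rfl⟩ := Submodule.mkQ_surjective _ z
  have hmk : (ℂ[X] ∙ q).mkQ r = (ℂ[X] ∙ q).mkQ (r %ₘ q') := by
    rw [Submodule.mkQ_apply, Submodule.mkQ_apply, Submodule.Quotient.eq, hspan]
    refine Submodule.mem_span_singleton.mpr ⟨r /ₘ q', ?_⟩
    rw [smul_eq_mul]
    nth_rewrite 2 [← modByMonic_add_div r q']
    ring
  rw [hmk]
  set r' := r %ₘ q' with hr'
  have hlt : r'.degree < q'.degree := degree_modByMonic_lt r hmon
  by_cases h0 : r' = 0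
  · simp [h0]
  have hnat : r'.natDegree < q.natDegree := by
    rw [← hdeg]
    exact natDegree_lt_natDegree h0 hlt
  have hsum : r' = ∑ j ∈ Finset.range q.natDegree, monomial j (r'.coeff j) :=
    as_sum_range' r' q.natDegree hnat
  rw [hsum]
  rw [map_sum]
  apply Submodule.sum_mem
  intro j hj
  have : (ℂ[X] ∙ q).mkQ (monomial j (r'.coeff j)) =
      (r'.coeff j) • (ℂ[X] ∙ q).mkQ (X ^ j) := by
    rw [Submodule.mkQ_apply, Submodule.mkQ_apply, ← Submodule.Quotient.mk_smul]
    congr 1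
    rw [Polynomial.smul_eq_C_mul, C_mul_X_pow_eq_monomial]
  rw [this]
  refine Submodule.smul_mem _ _ (Submodule.subset_span ?_)
  exact ⟨⟨j, Finset.mem_range.mp hj⟩, rfl⟩

lemma quot_fd (q : ℂ[X]) (hq : q ≠ 0) : FiniteDimensional ℂ (ℂ[X] ⧸ (ℂ[X] ∙ q)) := by
  have h := quot_span_top q hq
  have : Module.Finite ℂ (Submodule.span ℂ (Set.range fun j : Fin q.natDegree =>
      Submodule.mkQ (ℂ[X] ∙ q) (X ^ (j : ℕ)))) :=
    FiniteDimensional.span_of_finite ℂ (Set.finite_range _)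
  exact Module.Finite.of_surjective
    (Submodule.subtype _) (fun z => ⟨⟨z, h (Submodule.mem_top)⟩, rfl⟩)

lemma quot_finrank_le (q : ℂ[X]) (hq : q ≠ 0) :
    Module.finrank ℂ (ℂ[X] ⧸ (ℂ[X] ∙ q)) ≤ q.natDegree := by
  have h := quot_span_top q hq
  have := finrank_le_of_span_eq_top (le_antisymm le_top h)
  simpa using this

lemma mem_matCentralizer_iff {i : ℕ} {x y : Matrix (Fin i) (Fin i) ℂ} :
    y ∈ matCentralizer i x ↔ x * y = y * x := by
  simp [matCentralizer, LinearMap.mem_ker, LinearMap.sub_apply, sub_eq_zero]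

variable {i : ℕ} (x : Matrix (Fin i) (Fin i) ℂ)

def centToEnd (y : Matrix (Fin i) (Fin i) ℂ) (hy : x * y = y * x) :
    Module.End ℂ[X] (Module.AEval' x.mulVecLin) :=
  LinearMap.ofAEval x.mulVecLin
    ((Module.AEval'.of x.mulVecLin).toLinearMap ∘ₗ y.mulVecLin)
    (fun m => by
      simp only [LinearMap.comp_apply, LinearEquiv.coe_toLinearMap]
      rw [Module.AEval.X_smul_of]
      congr 1
      show y.mulVecLin (x.mulVecLin m) = x.mulVecLin (y.mulVecLin m)
      rw [← LinearMap.comp_apply, ← Matrix.mulVecLin_mul, ← hy, Matrix.mulVecLin_mul,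
        LinearMap.comp_apply])

lemma centToEnd_apply (y : Matrix (Fin i) (Fin i) ℂ) (hy : x * y = y * x)
    (m : Module.AEval' x.mulVecLin) :
    centToEnd x y hy m =
      Module.AEval'.of x.mulVecLin (y.mulVecLin ((Module.AEval'.of x.mulVecLin).symm m)) := rfl

def endToMat (T : Module.End ℂ[X] (Module.AEval' x.mulVecLin)) : Matrix (Fin i) (Fin i) ℂ :=
  LinearMap.toMatrix' ((Module.AEval'.of x.mulVecLin).symm.toLinearMap ∘ₗ
    (T.restrictScalars ℂ) ∘ₗ (Module.AEval'.of x.mulVecLin).toLinearMap)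

lemma endToMat_mem (T : Module.End ℂ[X] (Module.AEval' x.mulVecLin)) :
    endToMat x T ∈ matCentralizer i x := by
  rw [mem_matCentralizer_iff]
  apply Matrix.toLin'.injective
  rw [Matrix.toLin'_apply', Matrix.toLin'_apply', Matrix.mulVecLin_mul, Matrix.mulVecLin_mul]
  refine LinearMap.ext fun v => ?_
  simp only [LinearMap.comp_apply]
  have hm : ∀ v, (endToMat x T).mulVecLin v =
      (Module.AEval'.of x.mulVecLin).symm (T (Module.AEval'.of x.mulVecLin v)) := by
    intro v
    rw [endToMat, ← Matrix.toLin'_apply']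
    simp only [Matrix.toLin'_toMatrix', LinearMap.comp_apply, LinearEquiv.coe_toLinearMap]
    rfl
  rw [hm, hm, ← Module.AEval'.of_symm_X_smul, ← map_smul T, Module.AEval'.X_smul_of]
lemma foo : True := trivial

lemma endToMat_mulVec (T : Module.End ℂ[X] (Module.AEval' x.mulVecLin)) (v : Fin i → ℂ) :
    endToMat x T *ᵥ v =
      (Module.AEval'.of x.mulVecLin).symm (T (Module.AEval'.of x.mulVecLin v)) := by
  rw [← Matrix.mulVecLin_apply, endToMat, ← Matrix.toLin'_apply']
  simp only [Matrix.toLin'_toMatrix', LinearMap.comp_apply, LinearEquiv.coe_toLinearMap]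
  rfl

def centEquivEnd : (matCentralizer i x) ≃ₗ[ℂ] Module.End ℂ[X] (Module.AEval' x.mulVecLin) :=
  LinearEquiv.ofLinear
    { toFun := fun y => centToEnd x y.1 (mem_matCentralizer_iff.mp y.2)
      map_add' := fun y z => LinearMap.ext fun m => by
        rw [LinearMap.add_apply, centToEnd_apply, centToEnd_apply, centToEnd_apply,
          Submodule.coe_add, Matrix.mulVecLin_add, LinearMap.add_apply, map_add]
      map_smul' := fun c y => LinearMap.ext fun m => by
        rw [RingHom.id_apply, LinearMap.smul_apply, centToEnd_apply, centToEnd_apply,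
          Submodule.coe_smul, Matrix.mulVecLin_apply, Matrix.mulVecLin_apply,
          Matrix.smul_mulVec, LinearEquiv.map_smul] }
    { toFun := fun T => ⟨endToMat x T, endToMat_mem x T⟩
      map_add' := fun S T => Subtype.ext (by
        apply Matrix.toLin'.injective
        refine LinearMap.ext fun v => ?_
        simp only [Matrix.toLin'_apply', Matrix.mulVecLin_apply, Matrix.add_mulVec,
          endToMat_mulVec, LinearMap.add_apply, map_add, AddMemClass.mk_add_mk,
          Submodule.coe_add])
      map_smul' := fun c T => Subtype.ext (by
        apply Matrix.toLin'.injective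
        refine LinearMap.ext fun v => ?_
        simp only [Matrix.toLin'_apply', Matrix.mulVecLin_apply, RingHom.id_apply,
          SetLike.mk_smul_mk, Matrix.smul_mulVec, endToMat_mulVec,
          LinearMap.smul_apply, LinearEquiv.map_smul]) }
    (LinearMap.ext fun T => LinearMap.ext fun m => by
      simp only [LinearMap.comp_apply, LinearMap.coe_mk, AddHom.coe_mk, LinearMap.id_apply,
        centToEnd_apply, Matrix.mulVecLin_apply, endToMat_mulVec]
      simp)
    (LinearMap.ext fun y => Subtype.ext (by
      simp only [LinearMap.comp_apply, LinearMap.coe_mk, AddHom.coe_mk, LinearMap.id_apply]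
      apply Matrix.toLin'.injective
      refine LinearMap.ext fun v => ?_
      simp only [Matrix.toLin'_apply', Matrix.mulVecLin_apply, endToMat_mulVec,
        centToEnd_apply]
      simp [Matrix.mulVecLin_apply]))
section Homs

def diagMap (q : ℂ[X]) :
    (ℂ[X] ⧸ (ℂ[X] ∙ q)) →ₗ[ℂ[X]] ((ℂ[X] ⧸ (ℂ[X] ∙ q)) →ₗ[ℂ[X]] (ℂ[X] ⧸ (ℂ[X] ∙ q))) :=
  Submodule.liftQ _ (LinearMap.lsmul ℂ[X] (ℂ[X] ⧸ (ℂ[X] ∙ q))) (by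
    intro r hr
    obtain ⟨c, rfl⟩ := Submodule.mem_span_singleton.mp hr
    rw [LinearMap.mem_ker]
    refine LinearMap.ext fun z => ?_
    obtain ⟨s, rfl⟩ := Submodule.mkQ_surjective _ z
    show (c • q) • ((ℂ[X] ∙ q).mkQ s) = 0
    rw [Submodule.mkQ_apply, ← Submodule.Quotient.mk_smul, Submodule.Quotient.mk_eq_zero]
    exact Submodule.mem_span_singleton.mpr ⟨c * s, by simp [smul_eq_mul]; ring⟩)

lemma diagMap_injective (q : ℂ[X]) : Function.Injective (diagMap q) := by
  rw [← LinearMap.ker_eq_bot, diagMap, Submodule.ker_liftQ_eq_bot]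
  intro r hr
  rw [LinearMap.mem_ker] at hr
  have h1 : r • ((ℂ[X] ∙ q).mkQ 1) = 0 := congrArg (fun T => T ((ℂ[X] ∙ q).mkQ 1)) hr
  rw [Submodule.mkQ_apply, ← Submodule.Quotient.mk_smul, Submodule.Quotient.mk_eq_zero,
    smul_eq_mul, mul_one] at h1
  exact h1

instance homFD (q r : ℂ[X]) [FiniteDimensional ℂ (ℂ[X] ⧸ (ℂ[X] ∙ q))]
    [FiniteDimensional ℂ (ℂ[X] ⧸ (ℂ[X] ∙ r))] :
    FiniteDimensional ℂ ((ℂ[X] ⧸ (ℂ[X] ∙ q)) →ₗ[ℂ[X]] (ℂ[X] ⧸ (ℂ[X] ∙ r))) :=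
  FiniteDimensional.of_injective
    ({ toFun := fun f => f.restrictScalars ℂ
       map_add' := fun f g => rfl
       map_smul' := fun c f => rfl } :
      ((ℂ[X] ⧸ (ℂ[X] ∙ q)) →ₗ[ℂ[X]] (ℂ[X] ⧸ (ℂ[X] ∙ r))) →ₗ[ℂ]
        ((ℂ[X] ⧸ (ℂ[X] ∙ q)) →ₗ[ℂ] (ℂ[X] ⧸ (ℂ[X] ∙ r))))
    (LinearMap.restrictScalars_injective ℂ)

lemma finrank_le_diag (q : ℂ[X]) (hq : q ≠ 0) :
    Module.finrank ℂ (ℂ[X] ⧸ (ℂ[X] ∙ q)) ≤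
      Module.finrank ℂ ((ℂ[X] ⧸ (ℂ[X] ∙ q)) →ₗ[ℂ[X]] (ℂ[X] ⧸ (ℂ[X] ∙ q))) := by
  haveI := quot_fd q hq
  exact LinearMap.finrank_le_finrank_of_injective
    (f := (diagMap q).restrictScalars ℂ) (diagMap_injective q)

lemma cross_ne (p p' : ℂ[X]) (hp : Irreducible p) (hass : Associated p p')
    (a b : ℕ) (ha : 1 ≤ a) (hb : 1 ≤ b) :
    ¬ Subsingleton ((ℂ[X] ⧸ (ℂ[X] ∙ p ^ a)) →ₗ[ℂ[X]] (ℂ[X] ⧸ (ℂ[X] ∙ p' ^ b))) := by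
  intro hsub
  have hd : (p' : ℂ[X]) ^ b ∣ p ^ b := (Associated.pow_pow hass.symm).dvd
  set F : (ℂ[X] ⧸ (ℂ[X] ∙ p ^ a)) →ₗ[ℂ[X]] (ℂ[X] ⧸ (ℂ[X] ∙ p' ^ b)) :=
    Submodule.liftQ _ ((ℂ[X] ∙ p' ^ b).mkQ ∘ₗ LinearMap.toSpanSingleton ℂ[X] ℂ[X] (p ^ (b - 1)))
      (by
        intro r hr
        obtain ⟨c, rfl⟩ := Submodule.mem_span_singleton.mp hr
        rw [LinearMap.mem_ker, LinearMap.comp_apply, LinearMap.toSpanSingleton_apply,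
          Submodule.mkQ_apply, Submodule.Quotient.mk_eq_zero]
        refine Submodule.mem_span_singleton.mpr ?_
        have : p ^ b ∣ (c • p ^ a) • p ^ (b - 1) := by
          have h1 : p ^ b ∣ p ^ (a + (b - 1)) := pow_dvd_pow p (by omega)
          refine dvd_trans h1 ?_
          simp only [smul_eq_mul, pow_add]
          exact ⟨c, by ring⟩
        obtain ⟨d, hdq⟩ := hd.trans this
        exact ⟨d, by rw [smul_eq_mul, hdq, mul_comm]⟩) with hF
  have h0 : F = 0 := Subsingleton.elim _ _
  have h1' : F ((ℂ[X] ∙ p ^ a).mkQ 1) = (ℂ[X] ∙ p' ^ b).mkQ (p ^ (b - 1)) := by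
    rw [hF, Submodule.mkQ_apply, Submodule.liftQ_apply, LinearMap.comp_apply,
      LinearMap.toSpanSingleton_apply, one_smul]
  have h1 : ((ℂ[X] ∙ p' ^ b).mkQ (p ^ (b - 1))) = 0 := by
    rw [← h1', h0, LinearMap.zero_apply]
  rw [Submodule.mkQ_apply, Submodule.Quotient.mk_eq_zero] at h1
  obtain ⟨c, hc⟩ := Submodule.mem_span_singleton.mp h1
  -- p'^b ∣ p^(b-1) hence p^b ∣ p^(b-1)
  have h2 : p ^ b ∣ p ^ (b - 1) := by
    refine dvd_trans ((Associated.pow_pow hass).dvd) ⟨c, ?_⟩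
    rw [← hc, smul_eq_mul, mul_comm]
  have h3 : p ^ (b - 1) * p ∣ p ^ (b - 1) * 1 := by
    rw [mul_one]
    refine dvd_trans (dvd_of_eq ?_) h2
    rw [← pow_succ]
    congr 1
    omega
  have h4 : p ∣ 1 := (mul_dvd_mul_iff_left (pow_ne_zero _ hp.ne_zero)).mp h3
  exact hp.not_isUnit (isUnit_of_dvd_one h4)

lemma coprime_of_subsingleton_hom (p p' : ℂ[X]) (hp : Irreducible p) (hp' : Irreducible p')
    (a b : ℕ)
    (hzero : Subsingleton ((ℂ[X] ⧸ (ℂ[X] ∙ p ^ a)) →ₗ[ℂ[X]] (ℂ[X] ⧸ (ℂ[X] ∙ p' ^ b)))) :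
    IsCoprime (p ^ a) (p' ^ b) := by
  rcases Nat.eq_zero_or_pos a with rfl | ha
  · simpa using isCoprime_one_left
  rcases Nat.eq_zero_or_pos b with rfl | hb
  · simpa using isCoprime_one_right
  by_cases hass : Associated p p'
  · exact absurd hzero (cross_ne p p' hp hass a b ha hb)
  · have hcop : IsCoprime p p' := hp.coprime_iff_not_dvd.mpr
      (fun hdvd => hass (hp.associated_of_dvd hp' hdvd))
    exact (hcop.pow : IsCoprime (p ^ a) (p' ^ b))

end Homs

/-! ### Decomposing `End` of a finite product -/

def homPiEquiv {ι : Type} [Fintype ι] (N : Type) (A : ι → Type)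
    [AddCommGroup N] [Module ℂ[X] N]
    [∀ k, AddCommGroup (A k)] [∀ k, Module ℂ[X] (A k)]
    [∀ k, Module ℂ (A k)] [∀ k, IsScalarTower ℂ ℂ[X] (A k)] :
    (N →ₗ[ℂ[X]] ∀ l, A l) ≃ₗ[ℂ] ∀ l, (N →ₗ[ℂ[X]] A l) where
  toFun T l := (LinearMap.proj l) ∘ₗ T
  map_add' S T := by ext l n; rfl
  map_smul' c T := by ext l n; rfl
  invFun g := LinearMap.pi g
  left_inv T := by ext n l; rfl
  right_inv g := by ext l n; rfl

set_option maxHeartbeats 2000000 in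
set_option synthInstance.maxHeartbeats 400000 in
lemma finrank_end_pi {ι : Type} [Fintype ι] [DecidableEq ι] (q : ι → ℂ[X]) (hq : ∀ k, q k ≠ 0) :
    Module.finrank ℂ (Module.End ℂ[X] (DirectSum ι fun k => ℂ[X] ⧸ (ℂ[X] ∙ q k))) =
      ∑ k, ∑ l, Module.finrank ℂ
        ((ℂ[X] ⧸ (ℂ[X] ∙ q k)) →ₗ[ℂ[X]] (ℂ[X] ⧸ (ℂ[X] ∙ q l))) := by
  haveI := fun k => quot_fd (q k) (hq k)
  have e1 : Module.End ℂ[X] (DirectSum ι fun k => ℂ[X] ⧸ (ℂ[X] ∙ q k)) ≃ₗ[ℂ]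
      Module.End ℂ[X] (∀ k, ℂ[X] ⧸ (ℂ[X] ∙ q k)) :=
    ((DirectSum.linearEquivFunOnFintype ℂ[X] ι
      (fun k => ℂ[X] ⧸ (ℂ[X] ∙ q k))).conj).restrictScalars ℂ
  have e2 : Module.End ℂ[X] (∀ k, ℂ[X] ⧸ (ℂ[X] ∙ q k)) ≃ₗ[ℂ]
      ∀ k, ((ℂ[X] ⧸ (ℂ[X] ∙ q k)) →ₗ[ℂ[X]] (∀ l, ℂ[X] ⧸ (ℂ[X] ∙ q l))) :=
    (LinearMap.lsum ℂ[X] (fun k => ℂ[X] ⧸ (ℂ[X] ∙ q k)) ℂ).symm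
  have e3 : (∀ k, ((ℂ[X] ⧸ (ℂ[X] ∙ q k)) →ₗ[ℂ[X]] (∀ l, ℂ[X] ⧸ (ℂ[X] ∙ q l)))) ≃ₗ[ℂ]
      ∀ k, ∀ l, ((ℂ[X] ⧸ (ℂ[X] ∙ q k)) →ₗ[ℂ[X]] (ℂ[X] ⧸ (ℂ[X] ∙ q l))) :=
    LinearEquiv.piCongrRight fun k =>
      homPiEquiv (ℂ[X] ⧸ (ℂ[X] ∙ q k)) (fun l => ℂ[X] ⧸ (ℂ[X] ∙ q l))
  haveI : ∀ k l, Module.Free ℂ ((ℂ[X] ⧸ (ℂ[X] ∙ q k)) →ₗ[ℂ[X]] (ℂ[X] ⧸ (ℂ[X] ∙ q l))) :=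
    fun k l => Module.Free.of_basis
      (Module.Basis.ofVectorSpace ℂ ((ℂ[X] ⧸ (ℂ[X] ∙ q k)) →ₗ[ℂ[X]] (ℂ[X] ⧸ (ℂ[X] ∙ q l))))
  rw [(e1.trans (e2.trans e3)).finrank_eq, Module.finrank_pi_fintype]
  exact Finset.sum_congr rfl fun k _ => Module.finrank_pi_fintype ℂ

/-! ### The key degree bound -/

lemma aeval_mulVecLin {i : ℕ} (x : Matrix (Fin i) (Fin i) ℂ) (r : ℂ[X]) :
    (aeval x.mulVecLin r : Module.End ℂ (Fin i → ℂ)) = (aeval x r).mulVecLin := by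
  have h : x.mulVecLin = Matrix.toLinAlgEquiv' x := rfl
  rw [h]
  exact (Polynomial.aeval_algHom_apply (Matrix.toLinAlgEquiv' (R := ℂ) (n := Fin i)) x r).trans
    rfl

set_option maxHeartbeats 1000000 in
lemma smul_aeval_zero {i : ℕ} (x : Matrix (Fin i) (Fin i) ℂ) (r : ℂ[X])
    (h : aeval x r = 0) (m : Module.AEval' x.mulVecLin) : r • m = 0 := by
  apply (Module.AEval'.of x.mulVecLin).symm.injective
  rw [Module.AEval.of_symm_smul, aeval_mulVecLin, h]
  simp

set_option maxHeartbeats 4000000 in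
set_option synthInstance.maxHeartbeats 1000000 in
lemma degree_ge_of_ann {i : ℕ} (x : Matrix (Fin i) (Fin i) ℂ)
    (hreg : Module.finrank ℂ (matCentralizer i x) = i) :
    ∀ r : ℂ[X], r ≠ 0 → aeval x r = 0 → i ≤ r.natDegree := by
  classical
  have htor : Module.IsTorsion ℂ[X] (Module.AEval' x.mulVecLin) := by
    intro m
    refine ⟨⟨Matrix.charpoly x, mem_nonZeroDivisors_of_ne_zero x.charpoly_monic.ne_zero⟩, ?_⟩
    exact smul_aeval_zero x _ (Matrix.aeval_self_charpoly x) m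
  obtain ⟨ι, hfin, p, hp, e, ⟨eD⟩⟩ := Module.equiv_directSum_of_isTorsion htor
  haveI := hfin
  set q : ι → ℂ[X] := fun k => p k ^ e k with hqdef
  have hq0 : ∀ k, q k ≠ 0 := fun k => pow_ne_zero _ (hp k).ne_zero
  haveI := fun k => quot_fd (q k) (hq0 k)
  -- dimension of the base module
  have hMfin : Module.finrank ℂ (Module.AEval' x.mulVecLin) = i := by
    rw [← (Module.AEval'.of x.mulVecLin).finrank_eq, Module.finrank_pi, Fintype.card_fin]
  have hsum : ∑ k, Module.finrank ℂ (ℂ[X] ⧸ (ℂ[X] ∙ q k)) = i := by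
    rw [← finrank_directSum, ← (eD.restrictScalars ℂ).finrank_eq, hMfin]
  -- dimension of the endomorphism algebra
  have hEnd : Module.finrank ℂ (Module.End ℂ[X] (Module.AEval' x.mulVecLin)) = i := by
    rw [← (centEquivEnd x).finrank_eq, hreg]
  have hc : Module.finrank ℂ (Module.End ℂ[X] (Module.AEval' x.mulVecLin))
      = Module.finrank ℂ (Module.End ℂ[X] (DirectSum ι fun k => ℂ[X] ⧸ (ℂ[X] ∙ q k))) :=
    ((eD.conj).restrictScalars ℂ).finrank_eq
  have hEndD : ∑ k, ∑ l, Module.finrank ℂ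
      ((ℂ[X] ⧸ (ℂ[X] ∙ q k)) →ₗ[ℂ[X]] (ℂ[X] ⧸ (ℂ[X] ∙ q l))) = i := by
    rw [← finrank_end_pi q hq0, ← hc, hEnd]
  set hm : ι → ι → ℕ := fun k l => Module.finrank ℂ
      ((ℂ[X] ⧸ (ℂ[X] ∙ q k)) →ₗ[ℂ[X]] (ℂ[X] ⧸ (ℂ[X] ∙ q l))) with hh
  have hdiagsum : i ≤ ∑ k, hm k k := by
    rw [← hsum]
    exact Finset.sum_le_sum fun k _ => finrank_le_diag (q k) (hq0 k)
  have hsplit : ∑ k, ∑ l, hm k l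
      = ∑ k, hm k k + ∑ k, ∑ l ∈ Finset.univ.erase k, hm k l := by
    rw [← Finset.sum_add_distrib]
    refine Finset.sum_congr rfl fun k _ => ?_
    rw [← Finset.add_sum_erase _ _ (Finset.mem_univ k)]
  have hb : ∑ k, ∑ l, hm k l = i := hEndD
  have hoffzero : ∑ k, ∑ l ∈ Finset.univ.erase k, hm k l = 0 := by omega
  have hoff : ∀ k l, k ≠ l → hm k l = 0 := by
    intro k l hkl
    have h1 := (Finset.sum_eq_zero_iff.mp hoffzero) k (Finset.mem_univ k)
    exact (Finset.sum_eq_zero_iff.mp h1) l (Finset.mem_erase.mpr ⟨hkl.symm, Finset.mem_univ l⟩)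
  have hcop : Pairwise (Function.onFun IsCoprime q) := by
    intro k l hkl
    refine coprime_of_subsingleton_hom (p k) (p l) (hp k) (hp l) (e k) (e l) ?_
    have := hoff k l hkl
    rw [hh] at this
    exact Module.finrank_zero_iff.mp this
  have hdeg : i ≤ ∑ k, (q k).natDegree := by
    rw [← hsum]
    exact Finset.sum_le_sum fun k _ => quot_finrank_le (q k) (hq0 k)
  intro r hr0 hann
  have hdvd : ∀ k, q k ∣ r := by
    intro k
    have hz : r • (DirectSum.lof ℂ[X] ι (fun k => ℂ[X] ⧸ (ℂ[X] ∙ q k)) k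
        ((ℂ[X] ∙ q k).mkQ 1)) = 0 := by
      have h1 := smul_aeval_zero x r hann (eD.symm (DirectSum.lof ℂ[X] ι
        (fun k => ℂ[X] ⧸ (ℂ[X] ∙ q k)) k ((ℂ[X] ∙ q k).mkQ 1)))
      have h2 := congrArg eD h1
      rw [LinearEquiv.map_smul, LinearEquiv.apply_symm_apply, map_zero] at h2
      exact h2
    rw [← LinearMap.map_smul] at hz
    have h3 := congrArg (DirectSum.component ℂ[X] ι
      (fun k => ℂ[X] ⧸ (ℂ[X] ∙ q k)) k) hz
    rw [DirectSum.component.lof_self, map_zero] at h3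
    rw [Submodule.mkQ_apply, ← Submodule.Quotient.mk_smul, Submodule.Quotient.mk_eq_zero,
      smul_eq_mul, mul_one] at h3
    obtain ⟨c, hc⟩ := Submodule.mem_span_singleton.mp h3
    exact ⟨c, by rw [← hc, smul_eq_mul, mul_comm]⟩
  have hprod : (∏ k, q k) ∣ r := Fintype.prod_dvd_of_coprime hcop hdvd
  have h1 : (∏ k, q k).natDegree ≤ r.natDegree := natDegree_le_of_dvd hprod hr0
  rw [natDegree_prod _ _ (fun k _ => hq0 k)] at h1
  omega

/-- If `x ∈ gl(i,ℂ)` is regular (its centralizer has dimension `i`), then its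
centralizer is the span of `I, x, x², …, x^{i-1}`. -/
theorem stmt3 (i : ℕ) (x : Matrix (Fin i) (Fin i) ℂ)
    (hreg : Module.finrank ℂ (matCentralizer i x) = i) :
    Submodule.span ℂ (Set.range fun j : Fin i => x ^ (j : ℕ)) = matCentralizer i x := by
  classical
  have key := degree_ge_of_ann x hreg
  have li : LinearIndependent ℂ (fun j : Fin i => x ^ (j : ℕ)) := by
    rw [Fintype.linearIndependent_iff]
    intro g hg
    set r : ℂ[X] := ∑ j : Fin i, Polynomial.C (g j) * X ^ (j : ℕ) with hrdef
    have haevr : aeval x r = 0 := by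
      rw [hrdef, map_sum]
      rw [← hg]
      refine Finset.sum_congr rfl fun j _ => ?_
      rw [_root_.map_mul, map_pow, aeval_X, aeval_C, Algebra.smul_def]
    have hr0 : r = 0 := by
      by_contra hne
      have hkey := key r hne haevr
      rcases Nat.eq_zero_or_pos i with hi | hi
      · apply hne
        rw [hrdef]
        have : (Finset.univ : Finset (Fin i)) = ∅ := by
          subst hi; rfl
        rw [this, Finset.sum_empty]
      · have hle : r.natDegree ≤ i - 1 := by
          rw [hrdef]
          refine natDegree_sum_le_of_forall_le _ _ fun j _ => ?_
          exact (natDegree_C_mul_X_pow_le (g j) (j : ℕ)).trans (by omega)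
        omega
    intro j
    have hc : r.coeff (j : ℕ) = g j := by
      rw [hrdef, Polynomial.finset_sum_coeff]
      rw [Finset.sum_eq_single j]
      · rw [Polynomial.coeff_C_mul, Polynomial.coeff_X_pow, if_pos rfl, mul_one]
      · intro b _ hbj
        rw [Polynomial.coeff_C_mul, Polynomial.coeff_X_pow,
          if_neg (fun hh => hbj (Fin.ext hh.symm)), mul_zero]
      · intro hj; exact absurd (Finset.mem_univ j) hj
    rw [← hc, hr0, Polynomial.coeff_zero]
  have hspanle : Submodule.span ℂ (Set.range fun j : Fin i => x ^ (j : ℕ)) ≤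
      matCentralizer i x := by
    rw [Submodule.span_le]
    rintro _ ⟨j, rfl⟩
    exact mem_matCentralizer_iff.mpr (by rw [← pow_succ, ← pow_succ'])
  refine Submodule.eq_of_le_of_finrank_le hspanle ?_
  rw [hreg, finrank_span_eq_card li, Fintype.card_fin]
end
end

section
/- Let k be a complex reductive Lie algebra, p = l ⊕ u a parabolic subalgebra with Levi factor l and nilradical u, U the unipotent group with Lie algebra u, z the center of l, z_gen = {z ∈ z : z_k(z) = l}, z ∈ z_gen, and y ∈ l nilpotent. Then the U-orbit of z + y under the adjoint action equals the affine subspace z + y + u: U · (z + y) = z + y + u. -/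
noncomputable section

open Matrix

attribute [local instance 100] LieRing.ofAssociativeRing

/-- The exponential of a nilpotent `m × m` matrix, given by the (finite)
exponential series. -/
def nilExp (m : ℕ) (v : Matrix (Fin m) (Fin m) ℂ) : Matrix (Fin m) (Fin m) ℂ :=
  ∑ k ∈ Finset.range (m + 1), ((k.factorial : ℂ)⁻¹) • v ^ k

namespace Stmt11Aux

variable {m : ℕ}

lemma nil_pow_eq_zero {v : Matrix (Fin m) (Fin m) ℂ} (h : IsNilpotent v) : v ^ m = 0 := by
  have h1 : v.charpoly = Polynomial.X ^ m := by
    have h2 := Matrix.isNilpotent_charpoly_sub_pow_of_isNilpotent h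
    rw [← sub_eq_zero]
    simpa [Fintype.card_fin] using h2.eq_zero
  have h3 := v.aeval_self_charpoly
  rw [h1] at h3
  simpa using h3

lemma nil_pow_eq_zero' {v : Matrix (Fin m) (Fin m) ℂ} (h : IsNilpotent v) {k : ℕ} (hk : m ≤ k) :
    v ^ k = 0 :=
  pow_eq_zero_of_le hk (nil_pow_eq_zero h)

set_option maxHeartbeats 2000000 in
lemma ad_pow_term (v X : Matrix (Fin m) (Fin m) ℂ) (k : ℕ) :
    ((k.factorial : ℂ)⁻¹) • (((LieAlgebra.ad ℂ (Matrix (Fin m) (Fin m) ℂ) v) ^ k) X)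
      = ∑ i ∈ Finset.range (k+1),
          ((-1:ℂ)^(k-i) * ((i.factorial : ℂ) * ((k-i).factorial : ℂ))⁻¹) • (v^i * X * v^(k-i)) := by
  have had : LieAlgebra.ad ℂ (Matrix (Fin m) (Fin m) ℂ) v
      = LinearMap.mulLeft ℂ v - LinearMap.mulRight ℂ v := by
    rw [LieAlgebra.ad_eq_lmul_left_sub_lmul_right]; rfl
  have hcomm : Commute (LinearMap.mulLeft ℂ v) (-(LinearMap.mulRight ℂ v)) :=
    (LinearMap.commute_mulLeft_right (R := ℂ) v v).neg_right
  rw [had, sub_eq_add_neg, hcomm.add_pow]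
  rw [LinearMap.sum_apply, Finset.smul_sum]
  refine Finset.sum_congr rfl fun i hi => ?_
  have hik : i ≤ k := Nat.lt_succ_iff.mp (Finset.mem_range.mp hi)
  have h1 : (-(LinearMap.mulRight ℂ v)) ^ (k - i)
      = (-1:ℂ)^(k-i) • (LinearMap.mulRight ℂ (v ^ (k-i))) := by
    rw [← neg_one_smul ℂ (LinearMap.mulRight ℂ v), smul_pow, LinearMap.pow_mulRight]
  rw [LinearMap.pow_mulLeft, h1]
  simp only [Module.End.mul_apply, LinearMap.smul_apply, Module.End.natCast_apply,
    LinearMap.mulLeft_apply, LinearMap.mulRight_apply, LinearMap.map_smul,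
    smul_smul, mul_smul_comm, smul_mul_assoc, Nat.cast_smul_eq_nsmul ℂ]
  rw [← Nat.cast_smul_eq_nsmul ℂ (k.choose i), smul_smul, ← mul_assoc (v ^ i) X]
  congr 1
  rw [Nat.cast_choose ℂ hik]
  have h2 : (i.factorial : ℂ) ≠ 0 := Nat.cast_ne_zero.mpr (Nat.factorial_ne_zero i)
  have h3 : ((k-i).factorial : ℂ) ≠ 0 := Nat.cast_ne_zero.mpr (Nat.factorial_ne_zero (k-i))
  have h4 : (k.factorial : ℂ) ≠ 0 := Nat.cast_ne_zero.mpr (Nat.factorial_ne_zero k)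
  field_simp

set_option maxHeartbeats 2000000 in
lemma nilExp_conj (v X : Matrix (Fin m) (Fin m) ℂ) (hv : IsNilpotent v) :
    nilExp m v * X * nilExp m (-v) =
    ∑ k ∈ Finset.range (2*m+2),
      ((k.factorial : ℂ)⁻¹) • (((LieAlgebra.ad ℂ (Matrix (Fin m) (Fin m) ℂ) v) ^ k) X) := by
  set n := 2*m+2 with hn
  set g : ℕ → ℕ → Matrix (Fin m) (Fin m) ℂ :=
    fun i j => ((-1:ℂ)^j * ((i.factorial : ℂ) * (j.factorial : ℂ))⁻¹) • (v^i * X * v^j) with hg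
  have hgz : ∀ i j, (m+1 ≤ i ∨ m+1 ≤ j) → g i j = 0 := by
    rintro i j (h | h) <;>
      simp [hg, nil_pow_eq_zero' hv (le_trans (Nat.le_succ m) h)]
  have hL : nilExp m v * X * nilExp m (-v)
      = ∑ i ∈ Finset.range (m+1), ∑ j ∈ Finset.range (m+1), g i j := by
    unfold nilExp
    rw [Finset.sum_mul, Finset.sum_mul]
    refine Finset.sum_congr rfl fun i _ => ?_
    rw [Finset.mul_sum]
    refine Finset.sum_congr rfl fun j _ => ?_
    have hnv : (-v)^j = (-1:ℂ)^j • v^j := by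
      rw [← neg_one_smul ℂ v, smul_pow]
    rw [hnv, hg]
    simp only [smul_mul_assoc, mul_smul_comm, smul_smul]
    congr 1
    rw [mul_inv]
    ring
  have hsq : ∑ i ∈ Finset.range (m+1), ∑ j ∈ Finset.range (m+1), g i j
      = ∑ p ∈ Finset.range n ×ˢ Finset.range n, g p.1 p.2 := by
    rw [← Finset.sum_product']
    refine Finset.sum_subset ?_ ?_
    · exact Finset.product_subset_product (Finset.range_subset_range.2 (by omega))
        (Finset.range_subset_range.2 (by omega))
    · rintro ⟨i, j⟩ hp hnp
      simp only [Finset.mem_product, Finset.mem_range] at hp hnp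
      exact hgz i j (by omega)
  have hR : ∑ k ∈ Finset.range n,
      ((k.factorial : ℂ)⁻¹) • (((LieAlgebra.ad ℂ (Matrix (Fin m) (Fin m) ℂ) v) ^ k) X)
      = ∑ k ∈ Finset.range n, ∑ i ∈ Finset.range (k+1), g i (k-i) := by
    refine Finset.sum_congr rfl fun k _ => ?_
    rw [ad_pow_term]
  have htri : ∑ k ∈ Finset.range n, ∑ i ∈ Finset.range (k+1), g i (k-i)
      = ∑ p ∈ Finset.range n ×ˢ Finset.range n, g p.1 p.2 := by
    rw [Finset.sum_sigma' (Finset.range n) (fun k => Finset.range (k+1))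
        (fun k i => g i (k-i))]
    rw [← Finset.sum_filter_add_sum_filter_not (Finset.range n ×ˢ Finset.range n)
        (fun p => p.1 + p.2 < n)]
    have h2 : ∑ p ∈ (Finset.range n ×ˢ Finset.range n).filter (fun p => ¬ p.1 + p.2 < n),
        g p.1 p.2 = 0 := by
      refine Finset.sum_eq_zero ?_
      rintro ⟨i, j⟩ hp
      simp only [Finset.mem_filter, Finset.mem_product, Finset.mem_range] at hp
      exact hgz i j (by omega)
    rw [h2, add_zero]
    refine Finset.sum_bij' (fun p _ => (p.2, p.1 - p.2)) (fun p _ => ⟨p.1 + p.2, p.1⟩)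
      ?_ ?_ ?_ ?_ ?_
    · rintro ⟨k, i⟩ hp
      simp only [Finset.mem_sigma, Finset.mem_range] at hp
      simp only [Finset.mem_filter, Finset.mem_product, Finset.mem_range]
      omega
    · rintro ⟨i, j⟩ hp
      simp only [Finset.mem_filter, Finset.mem_product, Finset.mem_range] at hp
      simp only [Finset.mem_sigma, Finset.mem_range]
      omega
    · rintro ⟨k, i⟩ hp
      simp only [Finset.mem_sigma, Finset.mem_range] at hp
      have : i + (k - i) = k := by omega
      simp [this]
    · rintro ⟨i, j⟩ hp
      simp only [Finset.mem_filter, Finset.mem_product, Finset.mem_range] at hp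
      have : i + j - i = j := by omega
      simp [this]
    · rintro ⟨k, i⟩ hp
      rfl
  rw [hL, hsq, hR, htri]

/-- Lower-central-series-style filtration of `u`, as submodules of the matrix algebra. -/
def cser (m : ℕ) (u : LieSubalgebra ℂ (Matrix (Fin m) (Fin m) ℂ)) :
    ℕ → Submodule ℂ (Matrix (Fin m) (Fin m) ℂ)
  | 0 => u.toSubmodule
  | k+1 => Submodule.span ℂ {x | ∃ a ∈ u, ∃ b ∈ cser m u k, x = ⁅a, b⁆}

variable {u : LieSubalgebra ℂ (Matrix (Fin m) (Fin m) ℂ)}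

lemma cser_le (k : ℕ) : cser m u k ≤ u.toSubmodule := by
  induction k with
  | zero => exact le_rfl
  | succ k ih =>
    rw [cser]
    refine Submodule.span_le.2 ?_
    rintro x ⟨a, ha, b, hb, rfl⟩
    exact u.lie_mem ha (ih hb)

lemma cser_bracket_mem {a b : Matrix (Fin m) (Fin m) ℂ} (ha : a ∈ u) {k : ℕ}
    (hb : b ∈ cser m u k) : ⁅a, b⁆ ∈ cser m u (k+1) :=
  Submodule.subset_span ⟨a, ha, b, hb, rfl⟩

lemma cser_succ_le (k : ℕ) : cser m u (k+1) ≤ cser m u k := by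
  induction k with
  | zero => exact cser_le 1
  | succ k ih =>
    rw [cser]
    refine Submodule.span_le.2 ?_
    rintro x ⟨a, ha, b, hb, rfl⟩
    exact cser_bracket_mem ha (ih hb)

lemma cser_lie_mem {l : LieSubalgebra ℂ (Matrix (Fin m) (Fin m) ℂ)}
    (hlu : ∀ a ∈ l, ∀ v ∈ u, ⁅a, v⁆ ∈ u)
    {x : Matrix (Fin m) (Fin m) ℂ} (hx : x ∈ l) :
    ∀ k, ∀ b ∈ cser m u k, ⁅x, b⁆ ∈ cser m u k := by
  intro k
  induction k with
  | zero => exact fun b hb => hlu x hx b hb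
  | succ k ih =>
    intro b hb
    rw [cser] at hb
    induction hb using Submodule.span_induction with
    | mem b hbmem =>
      obtain ⟨a, ha, c, hc, rfl⟩ := hbmem
      rw [leibniz_lie]
      exact (cser m u (k+1)).add_mem
        (cser_bracket_mem (hlu x hx a ha) hc)
        (cser_bracket_mem ha (ih c hc))
    | zero => simpa using (cser m u (k+1)).zero_mem
    | add b c _ _ hb hc => rw [lie_add]; exact (cser m u (k+1)).add_mem hb hc
    | smul t b _ hb => rw [lie_smul]; exact (cser m u (k+1)).smul_mem t hb

lemma cser_eventually_bot (hun : ∀ v ∈ u, IsNilpotent v) : ∃ K, cser m u K = ⊥ := by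
  have hnil : LieRing.IsNilpotent ↥u :=
    (LieAlgebra.isNilpotent_iff_forall (R := ℂ)).mpr
      (fun x => LieAlgebra.isNilpotent_ad_of_isNilpotent (hun ↑x x.2))
  obtain ⟨K, hK⟩ := (LieModule.isNilpotent_iff ℂ ↥u ↥u).mp hnil
  have himg : ∀ k, ∀ x ∈ cser m u k,
      ∃ x' ∈ LieModule.lowerCentralSeries ℂ ↥u ↥u k, ((x' : ↥u) : Matrix (Fin m) (Fin m) ℂ) = x := by
    intro k
    induction k with
    | zero =>
      intro x hx
      exact ⟨⟨x, hx⟩, LieSubmodule.mem_top _, rfl⟩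
    | succ k ih =>
      intro x hx
      rw [cser] at hx
      induction hx using Submodule.span_induction with
      | mem x hxmem =>
        obtain ⟨a, ha, b, hb, rfl⟩ := hxmem
        obtain ⟨b', hb', hbeq⟩ := ih b hb
        refine ⟨⁅(⟨a, ha⟩ : ↥u), b'⁆, ?_, ?_⟩
        · rw [LieModule.lowerCentralSeries_succ]
          exact LieSubmodule.lie_mem_lie (LieSubmodule.mem_top _) hb'
        · rw [LieSubalgebra.coe_bracket, hbeq]
      | zero => exact ⟨0, (LieModule.lowerCentralSeries ℂ ↥u ↥u (k+1)).zero_mem, rfl⟩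
      | add b c _ _ hb hc =>
        obtain ⟨b', hb', hbeq⟩ := hb
        obtain ⟨c', hc', hceq⟩ := hc
        exact ⟨b' + c', (LieModule.lowerCentralSeries ℂ ↥u ↥u (k+1)).add_mem hb' hc',
          by simp [hbeq, hceq]⟩
      | smul t b _ hb =>
        obtain ⟨b', hb', hbeq⟩ := hb
        exact ⟨t • b', (LieModule.lowerCentralSeries ℂ ↥u ↥u (k+1)).smul_mem t hb',
          by rw [← hbeq]; rfl⟩
  refine ⟨K, ?_⟩
  rw [eq_bot_iff]
  intro x hx
  obtain ⟨x', hx', hxeq⟩ := himg K x hx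
  rw [hK] at hx'
  have : x' = 0 := by
    rwa [LieSubmodule.mem_bot] at hx'
  simp only [Submodule.mem_bot]
  rw [← hxeq, this]
  rfl

end Stmt11Aux

open Stmt11Aux in
set_option maxHeartbeats 4000000 in
/-- Let `p = l ⊕ u` be a parabolic subalgebra of `gl(m,ℂ)` with Levi factor `l`
and nilradical `u`, `z` a generic central element of `l` (central in `l` with
centralizer exactly `l`), and `y ∈ l` nilpotent.  Then the orbit of `z + y`
under `U = exp(u)` is the affine subspace `z + y + u`. -/
theorem stmt11 (m : ℕ) (l u : LieSubalgebra ℂ (Matrix (Fin m) (Fin m) ℂ))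
    (hlu : ∀ a ∈ l, ∀ v ∈ u, ⁅a, v⁆ ∈ u)
    (hun : ∀ v ∈ u, IsNilpotent v)
    (hlcapu : ∀ w : Matrix (Fin m) (Fin m) ℂ, w ∈ l → w ∈ u → w = 0)
    (z : Matrix (Fin m) (Fin m) ℂ)
    (hzc : ∀ a ∈ l, ⁅z, a⁆ = 0)
    (hzgen : ∀ w : Matrix (Fin m) (Fin m) ℂ, ⁅z, w⁆ = 0 → w ∈ l)
    (y : Matrix (Fin m) (Fin m) ℂ) (hy : y ∈ l) (hyn : IsNilpotent y) :
    {x : Matrix (Fin m) (Fin m) ℂ | ∃ v ∈ u, x = nilExp m v * (z + y) * nilExp m (-v)} =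
    {x : Matrix (Fin m) (Fin m) ℂ | ∃ w ∈ u, x = z + y + w} := by
  have zl : z ∈ l := hzgen z (lie_self z)
  have zyl : z + y ∈ l := l.add_mem zl hy
  set n := 2*m+2 with hn
  set S : Matrix (Fin m) (Fin m) ℂ → Matrix (Fin m) (Fin m) ℂ :=
    fun v => ∑ k ∈ Finset.range n,
      ((k.factorial : ℂ)⁻¹) • (((LieAlgebra.ad ℂ (Matrix (Fin m) (Fin m) ℂ) v) ^ k) (z+y))
    with hS
  have hconj : ∀ v ∈ u, nilExp m v * (z + y) * nilExp m (-v) = S v := fun v hv =>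
    nilExp_conj v (z+y) (hun v hv)
  -- powers of ad stay in u
  have hadpow_mem : ∀ v ∈ u, ∀ k,
      ((LieAlgebra.ad ℂ (Matrix (Fin m) (Fin m) ℂ) v) ^ (k+1)) (z+y) ∈ u := by
    intro v hv k
    induction k with
    | zero =>
      rw [pow_one, LieAlgebra.ad_apply, ← lie_skew]
      exact u.neg_mem (hlu _ zyl _ hv)
    | succ k ih =>
      rw [pow_succ', Module.End.mul_apply, LieAlgebra.ad_apply]
      exact u.lie_mem hv ih
  -- S v - (z+y) ∈ u
  have hSsub : ∀ v, S v - (z+y) = ∑ j ∈ Finset.range (2*m+1),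
      (((j+1).factorial : ℂ)⁻¹) • (((LieAlgebra.ad ℂ (Matrix (Fin m) (Fin m) ℂ) v) ^ (j+1)) (z+y)) := by
    intro v
    have h0 : S v = (∑ j ∈ Finset.range (2*m+1),
        (((j+1).factorial : ℂ)⁻¹) • (((LieAlgebra.ad ℂ (Matrix (Fin m) (Fin m) ℂ) v) ^ (j+1)) (z+y)))
        + ((Nat.factorial 0 : ℂ)⁻¹) • (((LieAlgebra.ad ℂ (Matrix (Fin m) (Fin m) ℂ) v) ^ 0) (z+y)) := by
      rw [hS]
      simp only
      rw [hn]
      exact Finset.sum_range_succ'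
        (fun k => ((k.factorial : ℂ)⁻¹) •
          (((LieAlgebra.ad ℂ (Matrix (Fin m) (Fin m) ℂ) v) ^ k) (z+y))) (2*m+1)
    have h1 : ((Nat.factorial 0 : ℂ)⁻¹) • (((LieAlgebra.ad ℂ (Matrix (Fin m) (Fin m) ℂ) v) ^ 0) (z+y))
        = z + y := by simp
    rw [h0, h1]
    abel
  have hSu : ∀ v ∈ u, S v - (z+y) ∈ u := by
    intro v hv
    rw [← LieSubalgebra.mem_toSubmodule, hSsub v]
    exact Submodule.sum_mem _ fun j _ =>
      Submodule.smul_mem _ _ (by rw [LieSubalgebra.mem_toSubmodule]; exact hadpow_mem v hv j)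
  -- injectivity of ad (z+y) on u
  have key : ∀ x ∈ u, ⁅z + y, x⁆ = 0 → x = 0 := by
    intro x hxu hx
    have hzy0 : ⁅z, y⁆ = 0 := hzc y hy
    have hcommzy : Commute (LieAlgebra.ad ℂ (Matrix (Fin m) (Fin m) ℂ) z)
        (LieAlgebra.ad ℂ (Matrix (Fin m) (Fin m) ℂ) y) := by
      apply LinearMap.ext
      intro w
      simp only [Module.End.mul_apply, LieAlgebra.ad_apply]
      rw [leibniz_lie, hzy0, zero_lie, zero_add]
    obtain ⟨N, hN⟩ := LieAlgebra.ad_nilpotent_of_nilpotent (R := ℂ) hyn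
    have claim1 : ∀ k, ∀ x' ∈ u,
        ((LieAlgebra.ad ℂ (Matrix (Fin m) (Fin m) ℂ) z) ^ k) x' = 0 → x' = 0 := by
      intro k
      induction k with
      | zero => intro x' _ h; simpa using h
      | succ k ih =>
        intro x' hx'u h
        rw [pow_succ, Module.End.mul_apply, LieAlgebra.ad_apply] at h
        have hzx : ⁅z, x'⁆ = 0 := ih _ (hlu z zl x' hx'u) h
        exact hlcapu x' (hzgen x' hzx) hx'u
    have hzx_neg : (LieAlgebra.ad ℂ (Matrix (Fin m) (Fin m) ℂ) z) x
        = -((LieAlgebra.ad ℂ (Matrix (Fin m) (Fin m) ℂ) y) x) := by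
      rw [LieAlgebra.ad_apply, LieAlgebra.ad_apply]
      rw [add_lie] at hx
      exact eq_neg_of_add_eq_zero_left hx
    have claim2 : ∀ k, ((LieAlgebra.ad ℂ (Matrix (Fin m) (Fin m) ℂ) z) ^ k) x
        = (-1:ℂ)^k • (((LieAlgebra.ad ℂ (Matrix (Fin m) (Fin m) ℂ) y) ^ k) x) := by
      intro k
      induction k with
      | zero => simp
      | succ k ih =>
        rw [pow_succ, Module.End.mul_apply, hzx_neg, map_neg]
        have hswap : ((LieAlgebra.ad ℂ (Matrix (Fin m) (Fin m) ℂ) z) ^ k)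
            ((LieAlgebra.ad ℂ (Matrix (Fin m) (Fin m) ℂ) y) x)
            = (LieAlgebra.ad ℂ (Matrix (Fin m) (Fin m) ℂ) y)
              (((LieAlgebra.ad ℂ (Matrix (Fin m) (Fin m) ℂ) z) ^ k) x) := by
          have hc := hcommzy.pow_left k
          have := LinearMap.congr_fun hc x
          simpa [Module.End.mul_apply] using this
        rw [hswap, ih, LinearMap.map_smul, ← neg_smul]
        have hys : (LieAlgebra.ad ℂ (Matrix (Fin m) (Fin m) ℂ) y)
            (((LieAlgebra.ad ℂ (Matrix (Fin m) (Fin m) ℂ) y) ^ k) x)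
            = ((LieAlgebra.ad ℂ (Matrix (Fin m) (Fin m) ℂ) y) ^ (k+1)) x := by
          rw [pow_succ', Module.End.mul_apply]
        rw [hys]
        congr 1
        rw [pow_succ]
        ring
    have hfin : ((LieAlgebra.ad ℂ (Matrix (Fin m) (Fin m) ℂ) z) ^ N) x = 0 := by
      rw [claim2 N, hN]
      simp
    exact claim1 N x hxu hfin
  -- solving ⁅z+y, δ⁆ = e within each filtration step
  have hCmap : ∀ k, ∀ e' ∈ cser m u k, ∃ δ ∈ cser m u k, ⁅z + y, δ⁆ = e' := by
    intro k e' he'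
    set θ : Module.End ℂ (Matrix (Fin m) (Fin m) ℂ) :=
      LieAlgebra.ad ℂ (Matrix (Fin m) (Fin m) ℂ) (z+y) with hθ
    have hθap : ∀ x, θ x = ⁅z + y, x⁆ := fun x => rfl
    have hmaps : ∀ x ∈ cser m u k, θ x ∈ cser m u k := by
      intro x hx
      rw [hθap]
      exact cser_lie_mem hlu zyl k x hx
    set T := θ.restrict hmaps with hT
    have hinj : Function.Injective T := by
      intro a b hab
      have h1 : θ (a : Matrix (Fin m) (Fin m) ℂ) = θ b := by
        have := congrArg Subtype.val hab
        simpa [hT, LinearMap.restrict_apply] using this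
      have h2 : ⁅z + y, (a : Matrix (Fin m) (Fin m) ℂ) - b⁆ = 0 := by
        rw [← hθap, map_sub, h1, sub_self]
      have h4 : (a : Matrix (Fin m) (Fin m) ℂ) - b ∈ u := by
        rw [← LieSubalgebra.mem_toSubmodule]
        exact u.toSubmodule.sub_mem (cser_le k a.2) (cser_le k b.2)
      have h5 := key _ h4 h2
      exact Subtype.ext (sub_eq_zero.mp h5)
    have hsurj : Function.Surjective T := LinearMap.injective_iff_surjective.mp hinj
    obtain ⟨d, hd⟩ := hsurj ⟨e', he'⟩
    refine ⟨↑d, d.2, ?_⟩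
    rw [← hθap]
    have := congrArg Subtype.val hd
    simpa [hT, LinearMap.restrict_apply] using this
  -- main fixed-point induction
  have main : ∀ w ∈ u, ∀ k, ∃ v ∈ u, S v - (z+y) - w ∈ cser m u k := by
    intro w hw k
    induction k with
    | zero =>
      refine ⟨0, u.zero_mem, ?_⟩
      have hS0 : S 0 = z + y := by
        simp only [hS]
        have had0 : LieAlgebra.ad ℂ (Matrix (Fin m) (Fin m) ℂ) (0 : Matrix (Fin m) (Fin m) ℂ)
            = 0 := (LieAlgebra.ad ℂ (Matrix (Fin m) (Fin m) ℂ)).map_zero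
        rw [had0]
        rw [Finset.sum_eq_single_of_mem 0 (Finset.mem_range.2 (by omega))]
        · simp
        · intro b _ hb
          rw [zero_pow hb]
          simp
      rw [hS0]
      have : z + y - (z + y) - w = -w := by abel
      rw [this]
      show -w ∈ (u.toSubmodule : Submodule ℂ (Matrix (Fin m) (Fin m) ℂ))
      exact Submodule.neg_mem _ (u.mem_toSubmodule.2 hw)
    | succ k ih =>
      obtain ⟨v, hvu, he⟩ := ih
      set e := S v - (z+y) - w with hSe
      obtain ⟨δ, hδC, hδθ⟩ := hCmap k e he
      have hδu : δ ∈ u := by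
        rw [← LieSubalgebra.mem_toSubmodule]
        exact cser_le k hδC
      refine ⟨v + δ, u.add_mem hvu hδu, ?_⟩
      set A := LieAlgebra.ad ℂ (Matrix (Fin m) (Fin m) ℂ) v with hA
      set B := LieAlgebra.ad ℂ (Matrix (Fin m) (Fin m) ℂ) δ with hB
      have hAB : LieAlgebra.ad ℂ (Matrix (Fin m) (Fin m) ℂ) (v + δ) = A + B := (LieAlgebra.ad ℂ (Matrix (Fin m) (Fin m) ℂ)).map_add v δ
      set D : ℕ → Matrix (Fin m) (Fin m) ℂ := fun j => ((A+B)^j - A^j) (z+y) with hD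
      have hDrec : ∀ j, D (j+1) = ⁅v + δ, D j⁆ + ⁅δ, (A^j) (z+y)⁆ := by
        intro j
        have h1 : (A+B)^(j+1) - A^(j+1) = (A+B) * ((A+B)^j - A^j) + B * A^j := by
          rw [pow_succ' (A+B) j, pow_succ' A j]
          noncomm_ring
        have h2 : D (j+1) = ((A+B) * ((A+B)^j - A^j) + B * A^j) (z+y) := by
          simp only [hD]
          rw [h1]
        rw [h2]
        rw [LinearMap.add_apply, Module.End.mul_apply, Module.End.mul_apply]
        have hb1 : ⁅v + δ, D j⁆ = (A+B) (D j) := by rw [← hAB]; rfl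
        have hb2 : ⁅δ, (A^j) (z+y)⁆ = B ((A^j) (z+y)) := rfl
        rw [hb1, hb2]
      have hQ : ∀ j, D j ∈ cser m u k := by
        intro j
        induction j with
        | zero =>
          have : D 0 = 0 := by rw [hD]; simp
          rw [this]; exact (cser m u k).zero_mem
        | succ j ihj =>
          rw [hDrec j]
          refine (cser m u k).add_mem ?_ ?_
          · exact cser_succ_le k (cser_bracket_mem (u.add_mem hvu hδu) ihj)
          · rcases Nat.eq_zero_or_pos j with rfl | hj
            · have hA0 : (A^0) (z+y) = z + y := by simp
              rw [hA0, ← lie_skew, hδθ]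
              exact (cser m u k).neg_mem he
            · obtain ⟨j', rfl⟩ : ∃ j', j = j'+1 := ⟨j-1, by omega⟩
              have hmem : (A^(j'+1)) (z+y) ∈ u := hadpow_mem v hvu j'
              rw [← lie_skew]
              exact (cser m u k).neg_mem (cser_succ_le k (cser_bracket_mem hmem hδC))
      have hRk : ∀ j, D (j+2) ∈ cser m u (k+1) := by
        intro j
        rw [hDrec (j+1)]
        refine (cser m u (k+1)).add_mem ?_ ?_
        · exact cser_bracket_mem (u.add_mem hvu hδu) (hQ (j+1))
        · have hmem : (A^(j+1)) (z+y) ∈ u := hadpow_mem v hvu j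
          rw [← lie_skew]
          exact (cser m u (k+1)).neg_mem (cser_bracket_mem hmem hδC)
      have hsum : S (v + δ) - S v
          = ∑ j ∈ Finset.range n, ((j.factorial:ℂ)⁻¹) • D j := by
        rw [hS]
        simp only [hAB]
        rw [← Finset.sum_sub_distrib]
        refine Finset.sum_congr rfl fun j _ => ?_
        simp only [hD, LinearMap.sub_apply, smul_sub, hA]
      have hD0 : ((Nat.factorial 0 : ℂ)⁻¹) • D 0 = 0 := by
        have : D 0 = 0 := by simp only [hD]; simp
        rw [this, smul_zero]
      have hD1 : ((Nat.factorial 1 : ℂ)⁻¹) • D 1 = -e := by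
        have hD1' : D 1 = -e := by
          simp only [hD]
          rw [pow_one, pow_one, LinearMap.sub_apply]
          have h2 : (A + B) (z+y) - A (z+y) = B (z+y) := by
            rw [LinearMap.add_apply]; abel
          rw [h2, hB, LieAlgebra.ad_apply, ← lie_skew, hδθ]
        rw [hD1']
        norm_num
      have hpeel : ∑ j ∈ Finset.range n, ((j.factorial:ℂ)⁻¹) • D j
          = (∑ j ∈ Finset.range (2*m), (((j+2).factorial:ℂ)⁻¹) • D (j+2)) - e := by
        have e1 : ∑ j ∈ Finset.range n, ((j.factorial:ℂ)⁻¹) • D j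
            = (∑ j ∈ Finset.range (2*m+1), (((j+1).factorial:ℂ)⁻¹) • D (j+1))
              + ((Nat.factorial 0 : ℂ)⁻¹) • D 0 := by
          rw [hn]
          exact Finset.sum_range_succ' (fun j => ((j.factorial:ℂ)⁻¹) • D j) (2*m+1)
        have e2 : ∑ j ∈ Finset.range (2*m+1), (((j+1).factorial:ℂ)⁻¹) • D (j+1)
            = (∑ j ∈ Finset.range (2*m), (((j+2).factorial:ℂ)⁻¹) • D (j+2))
              + ((Nat.factorial 1 : ℂ)⁻¹) • D 1 :=
          Finset.sum_range_succ' (fun j => (((j+1).factorial:ℂ)⁻¹) • D (j+1)) (2*m)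
        rw [e1, e2, hD0, hD1]
        abel
      have hfinal : S (v + δ) - (z+y) - w
          = ∑ j ∈ Finset.range (2*m), (((j+2).factorial:ℂ)⁻¹) • D (j+2) := by
        have h1 : S (v + δ) - (z+y) - w = e + (S (v + δ) - S v) := by
          rw [hSe]; abel
        rw [h1, hsum, hpeel]
        abel
      rw [hfinal]
      exact Submodule.sum_mem _ fun j _ => Submodule.smul_mem _ _ (hRk j)
  -- conclusion
  obtain ⟨K, hK⟩ := cser_eventually_bot hun
  ext x
  simp only [Set.mem_setOf_eq]
  constructor
  · rintro ⟨v, hv, rfl⟩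
    refine ⟨S v - (z+y), hSu v hv, ?_⟩
    rw [hconj v hv]
    abel
  · rintro ⟨w, hw, rfl⟩
    obtain ⟨v, hvu, hvbot⟩ := main w hw K
    rw [hK, Submodule.mem_bot, sub_sub, sub_eq_zero] at hvbot
    refine ⟨v, hvu, ?_⟩
    rw [hconj v hvu, hvbot]
end
end
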